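/- Norm identity and invariance for the pricing map: let Φ : ℝ^{n(m+1)} → ℝ^{n(m+1)} denote the map sending (r¹,…,r^m,s) to the tuple of right-hand sides of the liquidation value system. For all nonnegative r¹,…,r^m, s ∈ ℝ^n, one has ‖Φ(r¹,…,r^m,s)‖₁ = ‖a‖₁ + ‖Mˢ·s‖₁ + Σ_{i=1}^m ‖M^{d,i}·rⁱ‖₁ ≤ ‖a‖₁ + I^max·(‖s‖₁ + Σ_{i=1}^m ‖rⁱ‖₁). In particular, if ‖(r¹,…,r^m,s)‖₁ ≤ ‖a‖₁/(1 − I^max), then also ‖Φ(r¹,…,r^m,s)‖₁ ≤ ‖a‖₁/(1 − I^max). -/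

import Mathlib

open Matrix Finset Filter

noncomputable section

/-- Componentwise minimum of two vectors in ℝ^n. -/
def vmin {n : ℕ} (x y : Fin n → ℝ) : Fin n → ℝ := fun k => min (x k) (y k)

/-- Componentwise positive part of a vector in ℝ^n. -/
def vpos {n : ℕ} (x : Fin n → ℝ) : Fin n → ℝ := fun k => max (x k) 0

/-- ℓ¹-norm of a vector in ℝ^n. -/
def l1 {n : ℕ} (x : Fin n → ℝ) : ℝ := ∑ k, |x k|

/-- An n×n matrix is strictly left substochastic if all entries are nonnegative
and every column sum is < 1. -/
def StrictlyLeftSubstochastic {n : ℕ} (M : Matrix (Fin n) (Fin n) ℝ) : Prop :=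
  (∀ i j, 0 ≤ M i j) ∧ ∀ j, ∑ i, M i j < 1

/-- The liquidation value system: `r j` for `j = 0` is the highest-priority recovery claim,
`s` is equity. -/
def LiqSystem {n m : ℕ} (a : Fin n → ℝ) (Ms : Matrix (Fin n) (Fin n) ℝ)
    (Md : Fin m → Matrix (Fin n) (Fin n) ℝ)
    (d : Fin m → (Fin m → Fin n → ℝ) → (Fin n → ℝ) → (Fin n → ℝ))
    (r : Fin m → Fin n → ℝ) (s : Fin n → ℝ) : Prop :=
  (∀ j : Fin m, (j : ℕ) = 0 →
    r j = vmin (d j r s) (a + Ms.mulVec s + ∑ i, (Md i).mulVec (r i))) ∧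
  (∀ j : Fin m, (j : ℕ) ≠ 0 →
    r j = vmin (d j r s)
      (vpos (a + Ms.mulVec s + ∑ i, (Md i).mulVec (r i) - ∑ i ∈ Finset.Iio j, d i r s))) ∧
  s = vpos (a + Ms.mulVec s + ∑ i, (Md i).mulVec (r i) - ∑ i, d i r s)

/-- I^max : the maximum column sum over all ownership matrices. -/

lemma min_add_pos_sub (d x : ℝ) : min d x + max (x - d) 0 = x := by
  rcases le_total d x with h | h
  · rw [min_eq_left h, max_eq_left (by linarith)]; ring
  · rw [min_eq_right h, max_eq_right (by linarith)]; ring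

lemma pos_sub_pos (y d : ℝ) (hd : 0 ≤ d) : max (max y 0 - d) 0 = max (y - d) 0 := by
  rcases le_total y 0 with h | h
  · rw [max_eq_right h, max_eq_right (by linarith), max_eq_right (by linarith)]
  · rw [max_eq_left h]

lemma telescope (t : ℕ → ℝ) (ht : ∀ i, 0 ≤ t i) (c : ℝ) (hc : 0 ≤ c) (N : ℕ) :
    (∑ j ∈ Finset.range N, min (t j) (max (c - ∑ i ∈ Finset.range j, t i) 0)) +
      max (c - ∑ i ∈ Finset.range N, t i) 0 = c := by
  induction N with
  | zero => simp [max_eq_left hc]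
  | succ N ih =>
    rw [Finset.sum_range_succ, Finset.sum_range_succ]
    have h1 : max (c - (∑ i ∈ Finset.range N, t i + t N)) 0 =
        max (max (c - ∑ i ∈ Finset.range N, t i) 0 - t N) 0 := by
      rw [pos_sub_pos _ _ (ht N)]; ring_nf
    rw [h1]
    have := min_add_pos_sub (t N) (max (c - ∑ i ∈ Finset.range N, t i) 0)
    linarith [ih]

lemma sum_Iio_fin {m : ℕ} (f : Fin m → ℝ) (j : Fin m)
    (t : ℕ → ℝ) (h : ∀ i : Fin m, t i = f i) :
    ∑ i ∈ Finset.Iio j, f i = ∑ i ∈ Finset.range (j : ℕ), t i := by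
  rw [show Finset.range (j:ℕ) = Finset.Iio (j:ℕ) from (Nat.Iio_eq_range (j:ℕ)).symm,
    ← Fin.map_valEmbedding_Iio, Finset.sum_map]
  exact Finset.sum_congr rfl fun i _ => (h i).symm

lemma l1_of_nonneg {n : ℕ} (v : Fin n → ℝ) (hv : ∀ k, 0 ≤ v k) : l1 v = ∑ k, v k := by
  unfold l1; exact Finset.sum_congr rfl fun k _ => abs_of_nonneg (hv k)

lemma l1_mulVec_le {n : ℕ} (M : Matrix (Fin n) (Fin n) ℝ) (v : Fin n → ℝ) (C : ℝ)
    (hM : ∀ i j, 0 ≤ M i j) (hv : ∀ k, 0 ≤ v k) (hC : ∀ j, ∑ i, M i j ≤ C) :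
    l1 (M.mulVec v) ≤ C * l1 v := by
  have h1 : l1 (M.mulVec v) = ∑ j, (∑ i, M i j) * v j := by
    rw [l1_of_nonneg _ (fun k => by
      simpa [Matrix.mulVec, dotProduct] using
        Finset.sum_nonneg fun j (_ : j ∈ Finset.univ) => mul_nonneg (hM k j) (hv j))]
    simp only [Matrix.mulVec, dotProduct]
    rw [Finset.sum_comm]
    exact Finset.sum_congr rfl fun j _ => by rw [Finset.sum_mul]
  rw [h1, l1_of_nonneg v hv, Finset.mul_sum]
  exact Finset.sum_le_sum fun j _ => mul_le_mul_of_nonneg_right (hC j) (hv j)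

def Imax {n m : ℕ} (Ms : Matrix (Fin n) (Fin n) ℝ)
    (Md : Fin m → Matrix (Fin n) (Fin n) ℝ) : ℝ :=
  max (⨆ j, ∑ i, Ms i j) (⨆ l, ⨆ j, ∑ i, (Md l) i j)

/-- The map Φ sending (r¹,…,r^m,s) to the tuple of right-hand sides of the
liquidation value system. -/
def Phi {n m : ℕ} (a : Fin n → ℝ) (Ms : Matrix (Fin n) (Fin n) ℝ)
    (Md : Fin m → Matrix (Fin n) (Fin n) ℝ)
    (d : Fin m → (Fin m → Fin n → ℝ) → (Fin n → ℝ) → (Fin n → ℝ)) :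
    ((Fin m → Fin n → ℝ) × (Fin n → ℝ)) → ((Fin m → Fin n → ℝ) × (Fin n → ℝ)) :=
  fun p =>
    (fun j =>
      if (j : ℕ) = 0 then
        vmin (d j p.1 p.2) (a + Ms.mulVec p.2 + ∑ i, (Md i).mulVec (p.1 i))
      else
        vmin (d j p.1 p.2)
          (vpos (a + Ms.mulVec p.2 + ∑ i, (Md i).mulVec (p.1 i) -
            ∑ i ∈ Finset.Iio j, d i p.1 p.2)),
     vpos (a + Ms.mulVec p.2 + ∑ i, (Md i).mulVec (p.1 i) - ∑ i, d i p.1 p.2))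

/-- ℓ¹-norm on ℝ^{n(m+1)} = (ℝ^n)^m × ℝ^n. -/
def l1P {n m : ℕ} (p : (Fin m → Fin n → ℝ) × (Fin n → ℝ)) : ℝ :=
  (∑ i, l1 (p.1 i)) + l1 p.2

/-- Norm identity and invariance for the pricing map Φ on nonnegative tuples:
‖Φ(r,s)‖₁ = ‖a‖₁ + ‖Mˢ·s‖₁ + Σᵢ ‖M^{d,i}·rⁱ‖₁ ≤ ‖a‖₁ + I^max·(‖s‖₁ + Σᵢ ‖rⁱ‖₁);
in particular Φ maps the ball of radius ‖a‖₁/(1 − I^max) into itself. -/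
theorem phi_norm_identity {n m : ℕ} (hn : 0 < n) (hm : 0 < m)
    (a : Fin n → ℝ) (ha : ∀ k, 0 ≤ a k)
    (Ms : Matrix (Fin n) (Fin n) ℝ) (hMs : StrictlyLeftSubstochastic Ms)
    (Md : Fin m → Matrix (Fin n) (Fin n) ℝ) (hMd : ∀ i, StrictlyLeftSubstochastic (Md i))
    (d : Fin m → (Fin m → Fin n → ℝ) → (Fin n → ℝ) → (Fin n → ℝ))
    (hd : ∀ i r s k, 0 ≤ d i r s k)
    (r : Fin m → Fin n → ℝ) (s : Fin n → ℝ)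
    (hr : ∀ i k, 0 ≤ r i k) (hs : ∀ k, 0 ≤ s k) :
    l1P (Phi a Ms Md d (r, s)) =
      l1 a + l1 (Ms.mulVec s) + ∑ i, l1 ((Md i).mulVec (r i)) ∧
    l1 a + l1 (Ms.mulVec s) + ∑ i, l1 ((Md i).mulVec (r i)) ≤
      l1 a + Imax Ms Md * (l1 s + ∑ i, l1 (r i)) ∧
    (l1P (r, s) ≤ l1 a / (1 - Imax Ms Md) →
      l1P (Phi a Ms Md d (r, s)) ≤ l1 a / (1 - Imax Ms Md))  := by
  classical
  have hnN : Nonempty (Fin n) := ⟨⟨0, hn⟩⟩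
  have hmN : Nonempty (Fin m) := ⟨⟨0, hm⟩⟩
  obtain ⟨hMs0, hMs1⟩ := hMs
  -- the vector b
  set b : Fin n → ℝ := fun k => a k + Ms.mulVec s k + ∑ i, (Md i).mulVec (r i) k with hbdef
  have happ : ∀ k, (a + Ms.mulVec s + ∑ i, (Md i).mulVec (r i)) k = b k := by
    intro k; simp [hbdef, Finset.sum_apply]
  have hMv : ∀ (M : Matrix (Fin n) (Fin n) ℝ) (v : Fin n → ℝ),
      (∀ i j, 0 ≤ M i j) → (∀ k, 0 ≤ v k) → ∀ k, 0 ≤ M.mulVec v k := by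
    intro M v hM hv k
    simpa [Matrix.mulVec, dotProduct] using
      Finset.sum_nonneg fun j (_ : j ∈ Finset.univ) => mul_nonneg (hM k j) (hv j)
  have hb : ∀ k, 0 ≤ b k := by
    intro k
    have h1 := hMv Ms s hMs0 hs k
    have h2 : 0 ≤ ∑ i, (Md i).mulVec (r i) k :=
      Finset.sum_nonneg fun i _ => hMv (Md i) (r i) (hMd i).1 (hr i) k
    have := ha k
    simp only [hbdef]; linarith
  -- Imax facts
  have hIs : ∀ j, ∑ i, Ms i j ≤ Imax Ms Md := fun j =>
    le_trans (le_ciSup (f := fun j => ∑ i, Ms i j)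
      (Set.Finite.bddAbove (Set.finite_range _)) j) (le_max_left _ _)
  have hId : ∀ l j, ∑ i, (Md l) i j ≤ Imax Ms Md := by
    intro l j
    refine le_trans (le_trans (le_ciSup (f := fun j => ∑ i, (Md l) i j)
      (Set.Finite.bddAbove (Set.finite_range _)) j) ?_) (le_max_right _ _)
    exact le_ciSup (f := fun l => ⨆ j, ∑ i, (Md l) i j)
      (Set.Finite.bddAbove (Set.finite_range _)) l
  have hI0 : 0 ≤ Imax Ms Md :=
    le_trans (Finset.sum_nonneg fun i _ => hMs0 i ⟨0, hn⟩) (hIs ⟨0, hn⟩)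
  have hI1 : Imax Ms Md < 1 := by
    apply max_lt
    · obtain ⟨j0, hj0⟩ := Finite.exists_max (fun j => ∑ i, Ms i j)
      exact lt_of_le_of_lt (ciSup_le hj0) (hMs1 j0)
    · obtain ⟨l0, hl0⟩ := Finite.exists_max (fun l => ⨆ j, ∑ i, (Md l) i j)
      refine lt_of_le_of_lt (ciSup_le hl0) ?_
      obtain ⟨j0, hj0⟩ := Finite.exists_max (fun j => ∑ i, (Md l0) i j)
      exact lt_of_le_of_lt (ciSup_le hj0) ((hMd l0).2 j0)
  -- componentwise analysis of Phi
  have hkey : ∀ k : Fin n,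
      (∑ j : Fin m, (Phi a Ms Md d (r, s)).1 j k) + (Phi a Ms Md d (r, s)).2 k = b k ∧
      (∀ j : Fin m, 0 ≤ (Phi a Ms Md d (r, s)).1 j k) ∧
      0 ≤ (Phi a Ms Md d (r, s)).2 k := by
    intro k
    set t : ℕ → ℝ := fun i => if h : i < m then d ⟨i, h⟩ r s k else 0 with htdef
    have ht0 : ∀ i, 0 ≤ t i := by
      intro i; simp only [htdef]
      split
      · exact hd _ r s k
      · exact le_refl 0
    have htval : ∀ i : Fin m, t i = d i r s k := by
      intro i; simp [htdef, i.isLt]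
    have h2 : (Phi a Ms Md d (r, s)).2 k = max (b k - ∑ i ∈ Finset.range m, t i) 0 := by
      simp only [Phi, vpos, Pi.sub_apply, happ, Finset.sum_apply]
      congr 2
      rw [← Fin.sum_univ_eq_sum_range t m]
      exact Finset.sum_congr rfl fun i _ => (htval i).symm
    have h1 : ∀ j : Fin m, (Phi a Ms Md d (r, s)).1 j k =
        min (t j) (max (b k - ∑ i ∈ Finset.range (j : ℕ), t i) 0) := by
      intro j
      by_cases hj : (j : ℕ) = 0
      · have hr0 : Finset.range (j : ℕ) = ∅ := by rw [hj]; rfl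
        simp only [Phi, if_pos hj, vmin, htval j, hr0, Finset.sum_empty, sub_zero,
          max_eq_left (hb k), happ]
      · have hIio : (∑ i ∈ Finset.Iio j, d i r s) k = ∑ i ∈ Finset.range (j : ℕ), t i := by
          rw [Finset.sum_apply]
          exact sum_Iio_fin (fun i => d i r s k) j t htval
        simp only [Phi, if_neg hj, vmin, vpos, Pi.sub_apply, happ, hIio, htval j]
    have hpos1 : ∀ j : Fin m, 0 ≤ (Phi a Ms Md d (r, s)).1 j k := by
      intro j; rw [h1 j]; exact le_min (ht0 j) (le_max_right _ _)
    have hpos2 : 0 ≤ (Phi a Ms Md d (r, s)).2 k := by rw [h2]; exact le_max_right _ _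
    refine ⟨?_, hpos1, hpos2⟩
    rw [h2]
    have hsum : (∑ j : Fin m, (Phi a Ms Md d (r, s)).1 j k) =
        ∑ j ∈ Finset.range m, min (t j) (max (b k - ∑ i ∈ Finset.range j, t i) 0) := by
      rw [← Fin.sum_univ_eq_sum_range (fun j => min (t j)
        (max (b k - ∑ i ∈ Finset.range j, t i) 0)) m]
      exact Finset.sum_congr rfl fun j _ => h1 j
    rw [hsum]
    exact telescope t ht0 (b k) (hb k) m
  -- part 1 : the norm identity
  have hsumb : ∑ k, b k = l1 a + l1 (Ms.mulVec s) + ∑ i, l1 ((Md i).mulVec (r i)) := by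
    rw [l1_of_nonneg a ha, l1_of_nonneg _ (hMv Ms s hMs0 hs)]
    have : ∀ i : Fin m, l1 ((Md i).mulVec (r i)) = ∑ k, (Md i).mulVec (r i) k :=
      fun i => l1_of_nonneg _ (hMv (Md i) (r i) (hMd i).1 (hr i))
    simp only [this, hbdef]
    rw [Finset.sum_add_distrib, Finset.sum_add_distrib, Finset.sum_comm]
  have part1 : l1P (Phi a Ms Md d (r, s)) =
      l1 a + l1 (Ms.mulVec s) + ∑ i, l1 ((Md i).mulVec (r i)) := by
    rw [← hsumb]
    unfold l1P
    rw [l1_of_nonneg _ (fun k => (hkey k).2.2)]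
    have : ∀ i : Fin m, l1 ((Phi a Ms Md d (r, s)).1 i) =
        ∑ k, (Phi a Ms Md d (r, s)).1 i k :=
      fun i => l1_of_nonneg _ (fun k => (hkey k).2.1 i)
    simp only [this]
    rw [Finset.sum_comm, ← Finset.sum_add_distrib]
    exact Finset.sum_congr rfl fun k _ => (hkey k).1
  have part2 : l1 a + l1 (Ms.mulVec s) + ∑ i, l1 ((Md i).mulVec (r i)) ≤
      l1 a + Imax Ms Md * (l1 s + ∑ i, l1 (r i)) := by
    have hA : l1 (Ms.mulVec s) ≤ Imax Ms Md * l1 s := l1_mulVec_le Ms s _ hMs0 hs hIs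
    have hB : ∑ i, l1 ((Md i).mulVec (r i)) ≤ ∑ i, Imax Ms Md * l1 (r i) :=
      Finset.sum_le_sum fun i _ => l1_mulVec_le (Md i) (r i) _ (hMd i).1 (hr i) (hId i)
    rw [← Finset.mul_sum] at hB
    nlinarith
  refine ⟨part1, part2, ?_⟩
  intro hball
  have h1I : 0 < 1 - Imax Ms Md := by linarith
  rw [part1]
  have hX : l1P (r, s) = l1 s + ∑ i, l1 (r i) := by unfold l1P; ring
  rw [hX] at hball
  have hX1 : (l1 s + ∑ i, l1 (r i)) * (1 - Imax Ms Md) ≤ l1 a := by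
    rw [← le_div_iff₀ h1I]; exact hball
  rw [le_div_iff₀ h1I] at *
  have := part2
  nlinarith [mul_le_mul_of_nonneg_left hX1 hI0]
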